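/- Let 2 < p < ∞, 0 < γ < 2, r₀ = 2(p−γ)/(2−γ), and r > max(r₀, 3). Then for every u₀ ∈ L^p(ℝ³, (1+|x|²)^{−γ/2} dx) and every η > 0, there is a decomposition u₀ = v + b with v ∈ L²(ℝ³, (1+|x|²)^{−1} dx) and b ∈ L^r(ℝ³) with ‖b‖_{L^r} < η. -/

import Mathlib

open MeasureTheory ENNReal

noncomputable abbrev E3 : Type := EuclideanSpace ℝ (Fin 3)

/-- The weighted measure `Φ_γ dx` with `Φ_γ(x) = (1+|x|²)^{-γ/2}`. -/
noncomputable def muPhi (γ : ℝ) : Measure E3 :=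
  volume.withDensity (fun x => ENNReal.ofReal ((1 + ‖x‖ ^ 2) ^ (-γ / 2)))

lemma muPhi_density_measurable (γ : ℝ) :
    Measurable (fun x : E3 => ENNReal.ofReal ((1 + ‖x‖ ^ 2) ^ (-γ / 2))) := by
  apply Measurable.ennreal_ofReal
  exact (measurable_const.add ((measurable_norm).pow_const 2)).pow measurable_const

lemma volume_ac_muPhi (γ : ℝ) : (volume : Measure E3) ≪ muPhi γ := by
  intro s hs0
  set t := toMeasurable (muPhi γ) s with htdef
  have ht : MeasurableSet t := measurableSet_toMeasurable _ _
  have h0 : muPhi γ t = 0 := by rwa [measure_toMeasurable]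
  rw [muPhi, withDensity_apply _ ht] at h0
  rw [setLIntegral_eq_zero_iff ht (muPhi_density_measurable γ)] at h0
  replace h0 := ae_iff.mp h0
  have hset : {a : E3 | ¬(a ∈ t → ENNReal.ofReal ((1 + ‖a‖ ^ 2) ^ (-γ / 2)) = 0)} = t := by
    ext x
    simp only [Set.mem_setOf_eq, Classical.not_imp]
    constructor
    · exact fun h => h.1
    · intro hx
      refine ⟨hx, ?_⟩
      rw [ENNReal.ofReal_eq_zero, not_le]
      exact Real.rpow_pos_of_pos (by positivity) _
  rw [hset] at h0
  exact le_antisymm (le_trans (measure_mono (subset_toMeasurable _ _)) h0.le) zero_le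

lemma keyA {p c γ lam t a : ℝ} (hp : 2 < p) (hlam : 0 < lam) (ha : 1 ≤ a)
    (ht : lam * a ^ (-c) ≤ t) (hexp : c * (p - 2) - 1 = -γ / 2) :
    t ^ (2:ℝ) * a ^ (-(2:ℝ) / 2) ≤ lam ^ (2 - p) * (a ^ (-γ / 2) * t ^ p) := by
  have ha0 : (0:ℝ) < a := lt_of_lt_of_le one_pos ha
  have hw : 0 < lam * a ^ (-c) := by positivity
  have ht0 : 0 < t := lt_of_lt_of_le hw ht
  have h1 : t ^ ((2:ℝ) - p) ≤ (lam * a ^ (-c)) ^ ((2:ℝ) - p) :=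
    Real.rpow_le_rpow_of_nonpos hw ht (by linarith)
  have h2 : (lam * a ^ (-c)) ^ ((2:ℝ) - p) = lam ^ ((2:ℝ) - p) * a ^ ((-c) * (2 - p)) := by
    rw [Real.mul_rpow hlam.le (by positivity), ← Real.rpow_mul ha0.le]
  have h3 : t ^ (2:ℝ) = t ^ p * t ^ ((2:ℝ) - p) := by
    rw [← Real.rpow_add ht0]; norm_num
  have key : t ^ (2:ℝ) ≤ lam ^ ((2:ℝ) - p) * a ^ ((-c) * (2 - p)) * t ^ p := by
    calc t ^ (2:ℝ) = t ^ p * t ^ ((2:ℝ) - p) := h3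
      _ ≤ t ^ p * (lam ^ ((2:ℝ) - p) * a ^ ((-c) * (2 - p))) := by
          rw [← h2]
          exact mul_le_mul_of_nonneg_left h1 (Real.rpow_nonneg ht0.le _)
      _ = lam ^ ((2:ℝ) - p) * a ^ ((-c) * (2 - p)) * t ^ p := by ring
  have haux : a ^ ((-c) * (2 - p)) * a ^ (-(2:ℝ) / 2) = a ^ (-γ / 2) := by
    rw [← Real.rpow_add ha0]
    congr 1
    linarith [hexp]
  calc t ^ (2:ℝ) * a ^ (-(2:ℝ) / 2)
      ≤ (lam ^ ((2:ℝ) - p) * a ^ ((-c) * (2 - p)) * t ^ p) * a ^ (-(2:ℝ) / 2) :=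
        mul_le_mul_of_nonneg_right key (Real.rpow_nonneg ha0.le _)
    _ = lam ^ ((2:ℝ) - p) * ((a ^ ((-c) * (2 - p)) * a ^ (-(2:ℝ) / 2)) * t ^ p) := by ring
    _ = lam ^ (2 - p) * (a ^ (-γ / 2) * t ^ p) := by rw [haux]

lemma keyB {p c γ r lam t a : ℝ} (hp0 : 0 < p) (hrp : p < r) (hlam0 : 0 < lam)
    (ha : 1 ≤ a) (ht0 : 0 ≤ t) (ht : t ≤ lam * a ^ (-c))
    (hexp : -(c * (r - p)) ≤ -γ / 2) :
    t ^ r ≤ lam ^ (r - p) * (a ^ (-γ / 2) * t ^ p) := by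
  have ha0 : (0:ℝ) < a := lt_of_lt_of_le one_pos ha
  rcases eq_or_lt_of_le ht0 with h0 | h0
  · rw [← h0, Real.zero_rpow (by linarith : r ≠ 0), Real.zero_rpow hp0.ne', mul_zero, mul_zero]
  have h1 : t ^ (r - p) ≤ (lam * a ^ (-c)) ^ (r - p) :=
    Real.rpow_le_rpow ht0 ht (by linarith)
  have h2 : (lam * a ^ (-c)) ^ (r - p) = lam ^ (r - p) * a ^ ((-c) * (r - p)) := by
    rw [Real.mul_rpow hlam0.le (by positivity), ← Real.rpow_mul ha0.le]
  have h4 : a ^ ((-c) * (r - p)) ≤ a ^ (-γ / 2) := by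
    apply Real.rpow_le_rpow_of_exponent_le ha
    nlinarith [hexp]
  calc t ^ r = t ^ p * t ^ (r - p) := by rw [← Real.rpow_add h0]; ring_nf
    _ ≤ t ^ p * (lam ^ (r - p) * a ^ ((-c) * (r - p))) := by
        rw [← h2]; exact mul_le_mul_of_nonneg_left h1 (Real.rpow_nonneg ht0 _)
    _ ≤ t ^ p * (lam ^ (r - p) * a ^ (-γ / 2)) := by
        apply mul_le_mul_of_nonneg_left _ (Real.rpow_nonneg ht0 _)
        exact mul_le_mul_of_nonneg_left h4 (Real.rpow_nonneg hlam0.le _)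
    _ = lam ^ (r - p) * (a ^ (-γ / 2) * t ^ p) := by ring

/-- Calderón splitting: for `2 < p < ∞`, `0 < γ < 2`,
`r₀ = 2(p-γ)/(2-γ)` and `r > max(r₀,3)`, every `u₀ ∈ L^p(Φ_γ dx)` splits for every
`η > 0` as `u₀ = v + b` with `v ∈ L²(Φ₂ dx)` and `b ∈ L^r` with `‖b‖_r < η`. -/
theorem stmt18 (p γ r : ℝ) (hp2 : 2 < p) (hγ0 : 0 < γ) (hγ2 : γ < 2)
    (hr : max (2 * (p - γ) / (2 - γ)) 3 < r)
    (u₀ : E3 → ℝ) (hu₀ : MemLp u₀ (ENNReal.ofReal p) (muPhi γ)) (η : ℝ) (hη : 0 < η) :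
    ∃ v b : E3 → ℝ, u₀ = v + b ∧
      MemLp v 2 (muPhi 2) ∧
      MemLp b (ENNReal.ofReal r) volume ∧
      eLpNorm b (ENNReal.ofReal r) volume < ENNReal.ofReal η := by
  -- basic numerology
  have hp0 : (0:ℝ) < p := by linarith
  have h2γ : (0:ℝ) < 2 - γ := by linarith
  have hp2' : (0:ℝ) < p - 2 := by linarith
  have hr0 : 2 * (p - γ) / (2 - γ) < r := lt_of_le_of_lt (le_max_left _ _) hr
  have hr3 : (3:ℝ) < r := lt_of_le_of_lt (le_max_right _ _) hr
  have hrpos : (0:ℝ) < r := by linarith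
  set c : ℝ := (2 - γ) / (2 * (p - 2)) with hc
  have hc0 : 0 < c := by positivity
  have hcp : c * (p - 2) - 1 = -γ / 2 := by
    rw [hc]; field_simp; ring
  have hr0p : p < 2 * (p - γ) / (2 - γ) := by
    rw [lt_div_iff₀ h2γ]; nlinarith
  have hrp : p < r := lt_trans hr0p hr0
  have hcr : -(c * (r - p)) ≤ -γ / 2 := by
    have hkey : c * (2 * (p - γ) / (2 - γ) - p) = γ / 2 := by
      rw [hc]; field_simp; ring
    nlinarith [mul_le_mul_of_nonneg_left (le_of_lt hr0) hc0.le]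
  -- measures and densities
  set D : E3 → ℝ≥0∞ := fun x => ENNReal.ofReal ((1 + ‖x‖ ^ 2) ^ (-γ / 2)) with hD
  set D2 : E3 → ℝ≥0∞ := fun x => ENNReal.ofReal ((1 + ‖x‖ ^ 2) ^ (-(2:ℝ) / 2)) with hD2
  have hpne0 : ENNReal.ofReal p ≠ 0 := by
    simp [ENNReal.ofReal_eq_zero, not_le, hp0]
  have hptoReal : (ENNReal.ofReal p).toReal = p := ENNReal.toReal_ofReal hp0.le
  have hrne0 : ENNReal.ofReal r ≠ 0 := by
    simp [ENNReal.ofReal_eq_zero, not_le, hrpos]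
  have hrtoReal : (ENNReal.ofReal r).toReal = r := ENNReal.toReal_ofReal hrpos.le
  -- the total weighted mass
  set M : ℝ≥0∞ := ∫⁻ x, D x * (‖u₀ x‖₊ : ℝ≥0∞) ^ p ∂(volume : Measure E3) with hMdef
  have hMeq : ∫⁻ x, (‖u₀ x‖₊ : ℝ≥0∞) ^ p ∂(muPhi γ) = M := by
    rw [hMdef, muPhi]
    simp only [← enorm_eq_nnnorm]
    rw [lintegral_withDensity_eq_lintegral_mul₀' (muPhi_density_measurable γ).aemeasurable
      (hu₀.1.enorm.pow aemeasurable_const)]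
    rfl
  have hM : M ≠ ⊤ := by
    have h := hu₀.2
    rw [eLpNorm_eq_lintegral_rpow_enorm_toReal hpne0 ENNReal.ofReal_ne_top, hptoReal] at h
    simp only [enorm_eq_nnnorm] at h
    rw [hMeq] at h
    intro hMtop
    rw [hMtop, ENNReal.top_rpow_of_pos (by positivity)] at h
    exact (lt_irrefl _ h)
  -- choice of the truncation parameter lam
  set m : ℝ := M.toReal with hm
  have hm0 : 0 ≤ m := ENNReal.toReal_nonneg
  set A : ℝ := (η ^ r / (m + 1)) ^ (1 / (r - p)) with hA
  have hA0 : 0 < A := by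
    apply Real.rpow_pos_of_pos
    have : (0:ℝ) < η ^ r := Real.rpow_pos_of_pos hη r
    positivity
  set lam : ℝ := min 1 A with hlamdef
  have hlam0 : 0 < lam := lt_min one_pos hA0
  have hlam1 : lam ≤ 1 := min_le_left _ _
  have hlamkey : lam ^ (r - p) * m < η ^ r := by
    have h1 : lam ^ (r - p) ≤ A ^ (r - p) :=
      Real.rpow_le_rpow hlam0.le (min_le_right _ _) (by linarith)
    have h2 : A ^ (r - p) = η ^ r / (m + 1) := by
      rw [hA, ← Real.rpow_mul (by positivity), one_div,
        inv_mul_cancel₀ (by linarith : r - p ≠ 0), Real.rpow_one]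
    have h3 : lam ^ (r - p) * m ≤ (η ^ r / (m + 1)) * m := by
      apply mul_le_mul_of_nonneg_right _ hm0
      rw [← h2]; exact h1
    have h4 : (η ^ r / (m + 1)) * m < (η ^ r / (m + 1)) * (m + 1) := by
      apply mul_lt_mul_of_pos_left (lt_add_one m)
      have : (0:ℝ) < η ^ r := Real.rpow_pos_of_pos hη r
      positivity
    have h5 : (η ^ r / (m + 1)) * (m + 1) = η ^ r := by
      field_simp
    linarith
  -- the splitting
  set S : Set E3 := {x | lam * (1 + ‖x‖ ^ 2) ^ (-c) ≤ |u₀ x|} with hS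
  set v : E3 → ℝ := S.indicator u₀ with hv
  set b : E3 → ℝ := fun x => u₀ x - v x with hb
  have hsplit : u₀ = v + b := by
    funext x; simp [hb]
  -- basic facts about points
  have ha1 : ∀ x : E3, (1:ℝ) ≤ 1 + ‖x‖ ^ 2 := fun x => le_add_of_nonneg_right (by positivity)
  -- pointwise bound A
  have hAbd : ∀ x : E3, D2 x * (‖v x‖₊ : ℝ≥0∞) ^ (2:ℝ)
      ≤ ENNReal.ofReal (lam ^ (2 - p)) * (D x * (‖u₀ x‖₊ : ℝ≥0∞) ^ p) := by
    intro x
    by_cases hx : x ∈ S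
    · have hvx : v x = u₀ x := Set.indicator_of_mem hx _
      have ht : lam * (1 + ‖x‖ ^ 2) ^ (-c) ≤ |u₀ x| := hx
      have hkey := keyA (t := |u₀ x|) (a := 1 + ‖x‖ ^ 2) hp2 hlam0 (ha1 x) ht hcp
      rw [hvx]
      rw [← enorm_eq_nnnorm, Real.enorm_eq_ofReal_abs, ENNReal.ofReal_rpow_of_nonneg (abs_nonneg _) (by norm_num),
        ENNReal.ofReal_rpow_of_nonneg (abs_nonneg _) hp0.le]
      rw [hD2, hD]
      rw [← ENNReal.ofReal_mul (by positivity), ← ENNReal.ofReal_mul (by positivity),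
        ← ENNReal.ofReal_mul (by positivity)]
      apply ENNReal.ofReal_le_ofReal
      calc (1 + ‖x‖ ^ 2) ^ (-(2:ℝ) / 2) * |u₀ x| ^ (2:ℝ)
          = |u₀ x| ^ (2:ℝ) * (1 + ‖x‖ ^ 2) ^ (-(2:ℝ) / 2) := by ring
        _ ≤ lam ^ (2 - p) * ((1 + ‖x‖ ^ 2) ^ (-γ / 2) * |u₀ x| ^ p) := hkey
    · have hvx : v x = 0 := Set.indicator_of_notMem hx _
      rw [hvx]
      simp only [nnnorm_zero, ENNReal.coe_zero]
      rw [ENNReal.zero_rpow_of_pos (by norm_num)]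
      simp
  -- pointwise bound B
  have hBbd : ∀ x : E3, (‖b x‖₊ : ℝ≥0∞) ^ r
      ≤ ENNReal.ofReal (lam ^ (r - p)) * (D x * (‖u₀ x‖₊ : ℝ≥0∞) ^ p) := by
    intro x
    by_cases hx : x ∈ S
    · have hvx : v x = u₀ x := Set.indicator_of_mem hx _
      have hbx : b x = 0 := by rw [hb]; simp [hvx]
      rw [hbx]
      simp only [nnnorm_zero, ENNReal.coe_zero]
      rw [ENNReal.zero_rpow_of_pos hrpos]
      simp
    · have hvx : v x = 0 := Set.indicator_of_notMem hx _
      have hbx : b x = u₀ x := by rw [hb]; simp [hvx]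
      have ht : |u₀ x| ≤ lam * (1 + ‖x‖ ^ 2) ^ (-c) := le_of_not_ge hx
      have hkey := keyB (t := |u₀ x|) (a := 1 + ‖x‖ ^ 2) hp0 hrp hlam0 (ha1 x)
        (abs_nonneg _) ht hcr
      rw [hbx]
      rw [← enorm_eq_nnnorm, Real.enorm_eq_ofReal_abs, ENNReal.ofReal_rpow_of_nonneg (abs_nonneg _) hrpos.le,
        ENNReal.ofReal_rpow_of_nonneg (abs_nonneg _) hp0.le]
      rw [hD]
      rw [← ENNReal.ofReal_mul (by positivity), ← ENNReal.ofReal_mul (by positivity)]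
      exact ENNReal.ofReal_le_ofReal hkey
  -- measurability
  have hvol_ac : (volume : Measure E3) ≪ muPhi γ := volume_ac_muPhi γ
  have hu_vol : AEStronglyMeasurable u₀ (volume : Measure E3) := hu₀.1.mono_ac hvol_ac
  set u : E3 → ℝ := hu_vol.mk u₀ with hudef
  have hu_sm : StronglyMeasurable u := hu_vol.stronglyMeasurable_mk
  have hu_eq : u₀ =ᵐ[volume] u := hu_vol.ae_eq_mk
  have hwmeas : Measurable (fun x : E3 => lam * (1 + ‖x‖ ^ 2) ^ (-c)) :=
    ((measurable_const.add ((measurable_norm).pow_const 2)).pow measurable_const).const_mul lam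
  have hS' : MeasurableSet {x : E3 | lam * (1 + ‖x‖ ^ 2) ^ (-c) ≤ |u x|} :=
    measurableSet_le hwmeas hu_sm.measurable.abs
  have hv_eq : v =ᵐ[volume] ({x : E3 | lam * (1 + ‖x‖ ^ 2) ^ (-c) ≤ |u x|}).indicator u := by
    filter_upwards [hu_eq] with x hx
    rw [hv]
    by_cases hmem : x ∈ S
    · have hmem' : x ∈ {x : E3 | lam * (1 + ‖x‖ ^ 2) ^ (-c) ≤ |u x|} := by
        rw [Set.mem_setOf_eq, ← hx]; exact hmem
      rw [Set.indicator_of_mem hmem _, Set.indicator_of_mem hmem' _, hx]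
    · have hmem' : x ∉ {x : E3 | lam * (1 + ‖x‖ ^ 2) ^ (-c) ≤ |u x|} := by
        rw [Set.mem_setOf_eq, ← hx]; exact hmem
      rw [Set.indicator_of_notMem hmem _, Set.indicator_of_notMem hmem' _]
  have hv_vol : AEStronglyMeasurable v (volume : Measure E3) :=
    ((hu_sm.indicator hS').aestronglyMeasurable).congr hv_eq.symm
  have hv_mu2 : AEStronglyMeasurable v (muPhi 2) :=
    hv_vol.mono_ac (withDensity_absolutelyContinuous _ _)
  have hb_vol : AEStronglyMeasurable b (volume : Measure E3) := hu_vol.sub hv_vol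
  -- finiteness of the v-integral
  have hVint : ∫⁻ x, (‖v x‖₊ : ℝ≥0∞) ^ (2:ℝ) ∂(muPhi 2)
      ≤ ENNReal.ofReal (lam ^ (2 - p)) * M := by
    simp only [← enorm_eq_nnnorm]
    rw [muPhi, lintegral_withDensity_eq_lintegral_mul₀'
      (muPhi_density_measurable 2).aemeasurable (hv_mu2.enorm.pow aemeasurable_const)]
    calc ∫⁻ x, ((fun x : E3 => ENNReal.ofReal ((1 + ‖x‖ ^ 2) ^ (-(2:ℝ) / 2))) *
            fun x => (‖v x‖₊ : ℝ≥0∞) ^ (2:ℝ)) x ∂volume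
        ≤ ∫⁻ x, ENNReal.ofReal (lam ^ (2 - p)) * (D x * (‖u₀ x‖₊ : ℝ≥0∞) ^ p) ∂volume := by
          apply lintegral_mono
          intro x
          simpa only [Pi.mul_apply] using hAbd x
      _ = ENNReal.ofReal (lam ^ (2 - p)) * M := by
          rw [lintegral_const_mul' _ _ ENNReal.ofReal_ne_top, hMdef]
  have hmemv : MemLp v 2 (muPhi 2) := by
    refine ⟨hv_mu2, ?_⟩
    rw [eLpNorm_eq_lintegral_rpow_enorm_toReal (by norm_num) (by norm_num)]
    apply ENNReal.rpow_lt_top_of_nonneg (by norm_num)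
    apply ne_top_of_le_ne_top (ENNReal.mul_ne_top ENNReal.ofReal_ne_top hM)
    have : (2:ℝ≥0∞).toReal = (2:ℝ) := by norm_num
    rw [this]
    exact hVint
  -- the b-integral
  have hBint : ∫⁻ x, (‖b x‖₊ : ℝ≥0∞) ^ r ∂(volume : Measure E3)
      ≤ ENNReal.ofReal (lam ^ (r - p)) * M := by
    calc ∫⁻ x, (‖b x‖₊ : ℝ≥0∞) ^ r ∂(volume : Measure E3)
        ≤ ∫⁻ x, ENNReal.ofReal (lam ^ (r - p)) * (D x * (‖u₀ x‖₊ : ℝ≥0∞) ^ p) ∂volume :=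
          lintegral_mono hBbd
      _ = ENNReal.ofReal (lam ^ (r - p)) * M := by
          rw [lintegral_const_mul' _ _ ENNReal.ofReal_ne_top, hMdef]
  have hBlt : ∫⁻ x, (‖b x‖₊ : ℝ≥0∞) ^ r ∂(volume : Measure E3) < ENNReal.ofReal (η ^ r) := by
    apply lt_of_le_of_lt hBint
    have h1 : ENNReal.ofReal (lam ^ (r - p)) * M = ENNReal.ofReal (lam ^ (r - p) * m) := by
      rw [ENNReal.ofReal_mul (by positivity), hm, ENNReal.ofReal_toReal hM]
    rw [h1]
    exact (ENNReal.ofReal_lt_ofReal_iff (Real.rpow_pos_of_pos hη r)).mpr hlamkey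
  have hmemb : MemLp b (ENNReal.ofReal r) volume := by
    refine ⟨hb_vol, ?_⟩
    rw [eLpNorm_eq_lintegral_rpow_enorm_toReal hrne0 ENNReal.ofReal_ne_top, hrtoReal]
    apply ENNReal.rpow_lt_top_of_nonneg (by positivity)
    exact ne_top_of_le_ne_top (ENNReal.mul_ne_top ENNReal.ofReal_ne_top hM) hBint
  refine ⟨v, b, hsplit, hmemv, hmemb, ?_⟩
  rw [eLpNorm_eq_lintegral_rpow_enorm_toReal hrne0 ENNReal.ofReal_ne_top, hrtoReal]
  have h2 : (ENNReal.ofReal (η ^ r)) ^ (1 / r) = ENNReal.ofReal η := by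
    rw [ENNReal.ofReal_rpow_of_pos (Real.rpow_pos_of_pos hη r),
      ← Real.rpow_mul hη.le, mul_one_div, div_self hrpos.ne', Real.rpow_one]
  rw [← h2]
  exact ENNReal.rpow_lt_rpow hBlt (by positivity)
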